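/- arXiv:2308.16749 — 2 statements merged into one kernel-verified Lean document; each statement's English description precedes it below -/
import Mathlib

section
/- For all integers 0 ≤ j ≤ k one has Σ_{i=j}^{k} t_{k,i} · s_{i,j} = 1 if j = k and = 0 if j < k; that is, the lower-triangular matrices (t_{k,i}) and (s_{i,j}) are mutually inverse in one order. -/
open Finset

noncomputable section

/-- The field `F = ℚ(𝔮)` of rational functions over `ℚ` in an indeterminate `𝔮`. -/
abbrev F : Type := RatFunc ℚ

/-- The indeterminate `𝔮`. -/
noncomputable def qv : F := RatFunc.X

/-- `{n} = 𝔮^n - 𝔮^{-n}` for `n : ℤ`. -/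
def brc (n : ℤ) : F := qv ^ n - qv ^ (-n)

/-- `[n] = {n}/{1}`. -/
def brk (n : ℤ) : F := brc n / brc 1

/-- `{n}! = ∏_{j=1}^n {j}`. -/
def brcFac (n : ℕ) : F := ∏ j ∈ Finset.range n, brc ((j : ℤ) + 1)

/-- `[n]! = ∏_{j=1}^n [j]`. -/
def brkFac (n : ℕ) : F := ∏ j ∈ Finset.range n, brk ((j : ℤ) + 1)

/-- `q = 𝔮²`. -/
def qq : F := qv ^ 2

/-- The q-Pochhammer symbol `(x; q)_k = ∏_{j=0}^{k-1} (1 - x q^j)`. -/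
def poch (x : F) (k : ℕ) : F := ∏ j ∈ Finset.range k, (1 - x * qq ^ j)

/-- The q-binomial coefficient `[n choose i]_q`. -/
def qbinom (n i : ℕ) : F := poch qq n / (poch qq i * poch qq (n - i))

/-- `t_{k,i} = {2k+1}! {2i+2} / ({k+i+2}! {k-i}!)` for `0 ≤ i ≤ k`. -/
def tcoef (k i : ℕ) : F :=
  brcFac (2 * k + 1) * brc (2 * (i : ℤ) + 2) / (brcFac (k + i + 2) * brcFac (k - i))

/-- `s_{i,j} = (-1)^{i+j} [i+1+j]! / ([i-j]! [2j+1]!)` for `0 ≤ j ≤ i`. -/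
def scoef (i j : ℕ) : F :=
  (-1) ^ (i + j) * brkFac (i + 1 + j) / (brkFac (i - j) * brkFac (2 * j + 1))

lemma qv_ne_zero : qv ≠ 0 := RatFunc.X_ne_zero

lemma qv_pow_ne_one (m : ℕ) (hm : m ≠ 0) : qv ^ m ≠ 1 := by
  intro h
  have h0 : (RatFunc.X : F) ^ m = algebraMap (Polynomial ℚ) F (Polynomial.X ^ m) := by simp
  rw [qv, h0] at h
  have h1 : (Polynomial.X : Polynomial ℚ) ^ m = 1 := by
    apply RatFunc.algebraMap_injective ℚ; simpa using h
  have := congrArg Polynomial.natDegree h1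
  simp at this; omega

lemma brc_ne_zero {n : ℤ} (hn : n ≠ 0) : brc n ≠ 0 := by
  intro h
  have hq := qv_ne_zero
  have h2 : qv ^ (2*n) = 1 := by
    have h1 : qv ^ n = qv ^ (-n) := by rwa [brc, sub_eq_zero] at h
    calc qv ^ (2*n) = qv ^ n * qv ^ n := by rw [two_mul, zpow_add₀ hq]
    _ = qv ^ n * qv ^ (-n) := by rw [h1]
    _ = 1 := by rw [← zpow_add₀ hq]; simp
  rcases lt_or_gt_of_ne hn with h' | h'
  · have h3 : qv ^ (2*(-n)) = 1 := by rw [mul_neg, zpow_neg, h2, inv_one]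
    have hnat : qv ^ ((2*(-n)).toNat) = 1 := by
      rw [← zpow_natCast, Int.toNat_of_nonneg (by omega)]; exact h3
    exact qv_pow_ne_one _ (by omega) hnat
  · have hnat : qv ^ ((2*n).toNat) = 1 := by
      rw [← zpow_natCast, Int.toNat_of_nonneg (by omega)]; exact h2
    exact qv_pow_ne_one _ (by omega) hnat

lemma brcFac_ne_zero (n : ℕ) : brcFac n ≠ 0 := by
  refine Finset.prod_ne_zero_iff.mpr fun i _ => brc_ne_zero (by omega)

lemma brc_mul (a b : ℤ) :
    brc a * brc b = (qv^(a+b) + qv^(-(a+b))) - (qv^(a-b) + qv^(-(a-b))) := by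
  have hq := qv_ne_zero
  simp only [brc, zpow_add₀ hq, zpow_sub₀ hq, zpow_neg]
  have h1 : qv ^ a ≠ 0 := zpow_ne_zero _ hq
  have h2 : qv ^ b ≠ 0 := zpow_ne_zero _ hq
  field_simp
  ring

lemma brc_key (q s t : ℤ) : brc (s-t-q) * brc q + brc s * brc t = brc (s-q) * brc (t+q) := by
  rw [brc_mul, brc_mul, brc_mul]
  rw [show s-t-q+q = s-t by ring, show s-t-q-q = s-t-2*q by ring,
      show s-q+(t+q) = s+t by ring, show s-q-(t+q) = s-t-2*q by ring]
  ring

lemma brcFac_succ (n : ℕ) : brcFac (n+1) = brcFac n * brc ((n:ℤ)+1) :=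
  Finset.prod_range_succ _ n

lemma brkFac_eq (n : ℕ) : brkFac n = brcFac n / brc 1 ^ n := by
  induction n with
  | zero => simp [brkFac, brcFac]
  | succ n ih =>
    rw [brkFac, Finset.prod_range_succ, ← brkFac, ih, brcFac_succ, brk, pow_succ]
    field_simp

lemma scoef_eq (i j : ℕ) (h : j ≤ i) :
    scoef i j = (-1)^(i+j) * brcFac (i+1+j) / (brcFac (i-j) * brcFac (2*j+1)) := by
  have o := brc_ne_zero (n := 1) (by omega)
  rw [scoef, brkFac_eq, brkFac_eq, brkFac_eq]
  have e : i-j+(2*j+1) = i+1+j := by omega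
  rw [div_mul_div_comm, ← pow_add, e, mul_div_assoc,
      div_div_div_cancel_right₀ (pow_ne_zero _ o), ← mul_div_assoc]

def bb (j k i : ℕ) : F :=
  (-1)^(i+j) * brcFac (2*k+1) * brcFac (i+j+2) * brc ((k:ℤ) - (i:ℤ)) /
    (brcFac (k+i+2) * brcFac (k-i) * brcFac (i-j) * brcFac (2*j+1) * brc ((k:ℤ) - (j:ℤ)))

set_option maxHeartbeats 2000000 in
lemma step (j m r : ℕ) :
    tcoef (j+(m+1)+r) (j+(m+1)) * scoef (j+(m+1)) j
      = bb j (j+(m+1)+r) (j+(m+1)) - bb j (j+(m+1)+r) (j+m) := by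
  have hq := qv_ne_zero
  rw [scoef_eq _ _ (by omega)]
  simp only [tcoef, bb]
  rw [show j+(m+1)+r - (j+(m+1)) = r from by omega,
      show j+(m+1) - j = m+1 from by omega,
      show j+(m+1)+r - (j+m) = r+1 from by omega,
      show j+m - j = m from by omega]
  have E1 : brcFac (j+(m+1)+j+2) = brcFac (j+(m+1)+1+j) * brc ((j:ℤ)+(m+1)+1+j+1) := by
    rw [show j+(m+1)+j+2 = (j+(m+1)+1+j)+1 from by omega, brcFac_succ]; push_cast; ring_nf
  have E2 : brcFac (j+(m+1)+r+(j+(m+1))+2) = brcFac (j+(m+1)+r+(j+m)+2) * brc ((j:ℤ)+(m+1)+r+(j+m)+2+1) := by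
    rw [show j+(m+1)+r+(j+(m+1))+2 = (j+(m+1)+r+(j+m)+2)+1 from by omega, brcFac_succ]; push_cast; ring_nf
  have E3 : brcFac (r+1) = brcFac r * brc ((r:ℤ)+1) := brcFac_succ r
  have E4 : brcFac (m+1) = brcFac m * brc ((m:ℤ)+1) := brcFac_succ m
  have S1 : ((-1:F))^(j+(m+1)+j) = -(-1)^m := by
    rw [show j+(m+1)+j = 2*j+m+1 from by omega, pow_succ, pow_add, pow_mul]; simp
  have S2 : ((-1:F))^(j+m+j) = (-1)^m := by
    rw [show j+m+j = 2*j+m from by omega, pow_add, pow_mul]; simp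
  rw [E1, E2, E3, E4, S1, S2]
  have hkey := brc_key ((r:ℤ)) ((j:ℤ)+(m+1)+r+(j+(m+1))+2) ((m:ℤ)+1)
  push_cast
  ring_nf
  ring_nf at hkey
  have nA : brcFac (3+j*2+m*2+r*2) ≠ 0 := brcFac_ne_zero _
  have nB : brcFac (3+j*2+m*2+r) ≠ 0 := brcFac_ne_zero _
  have nC : brcFac (2+j*2+m) ≠ 0 := brcFac_ne_zero _
  have nD1 : brcFac r ≠ 0 := brcFac_ne_zero _
  have nD2 : brcFac m ≠ 0 := brcFac_ne_zero _
  have nD3 : brcFac (1+j*2) ≠ 0 := brcFac_ne_zero _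
  have nE1 : brc (4+(j:ℤ)*2+(m:ℤ)*2+(r:ℤ)) ≠ 0 := brc_ne_zero (by omega)
  have nE2 : brc (3+(j:ℤ)*2+(m:ℤ)) ≠ 0 := brc_ne_zero (by omega)
  have nE3 : brc (1+(m:ℤ)) ≠ 0 := brc_ne_zero (by omega)
  have nE4 : brc (1+(r:ℤ)) ≠ 0 := brc_ne_zero (by omega)
  have nE5 : brc (1+(m:ℤ)+(r:ℤ)) ≠ 0 := brc_ne_zero (by omega)
  have nE6 : brc (1:ℤ) ≠ 0 := brc_ne_zero (by omega)
  field_simp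
  linear_combination hkey

lemma base (j r : ℕ) : tcoef (j+r+1) j * scoef j j = bb j (j+r+1) j := by
  have hq := qv_ne_zero
  rw [scoef_eq _ _ le_rfl]
  simp only [tcoef, bb]
  rw [show j+r+1 - j = r+1 from by omega, show j - j = 0 from by omega]
  have E1 : brcFac (j+j+2) = brcFac (j+1+j) * brc ((j:ℤ)+1+(j:ℤ)+1) := by
    rw [show j+j+2 = (j+1+j)+1 from by omega, brcFac_succ]; push_cast; ring_nf
  have S1 : ((-1:F))^(j+j) = 1 := by rw [show j+j = 2*j from by omega, pow_mul]; simp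
  rw [E1, S1]
  push_cast
  ring_nf
  have n1 : brcFac (3+j*2+r) ≠ 0 := brcFac_ne_zero _
  have n2 : brcFac (1+r) ≠ 0 := brcFac_ne_zero _
  have n3 : brcFac (1+j*2) ≠ 0 := brcFac_ne_zero _
  have n4 : brcFac (1+j+j) ≠ 0 := brcFac_ne_zero _
  have n5 : brc (1+(r:ℤ)) ≠ 0 := brc_ne_zero (by omega)
  have n6 : brc (2+(j:ℤ)*2) ≠ 0 := brc_ne_zero (by omega)
  have n7 : brcFac 0 ≠ 0 := brcFac_ne_zero _
  field_simp

lemma diag (k : ℕ) : tcoef k k * scoef k k = 1 := by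
  rw [scoef_eq _ _ le_rfl]
  simp only [tcoef]
  rw [show k - k = 0 from by omega]
  have E1 : brcFac (k+k+2) = brcFac (k+1+k) * brc ((k:ℤ)+1+(k:ℤ)+1) := by
    rw [show k+k+2 = (k+1+k)+1 from by omega, brcFac_succ]; push_cast; ring_nf
  have E2 : brcFac (2*k+1) = brcFac (k+1+k) := by rw [show 2*k+1 = k+1+k from by omega]
  have S1 : ((-1:F))^(k+k) = 1 := by rw [show k+k = 2*k from by omega, pow_mul]; simp
  rw [E1, E2, S1]
  have n1 : brcFac (k+1+k) ≠ 0 := brcFac_ne_zero _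
  have n2 : brcFac (2*k+1) ≠ 0 := brcFac_ne_zero _
  have n3 : brcFac 0 ≠ 0 := brcFac_ne_zero _
  have n4 : brc ((k:ℤ)+1+(k:ℤ)+1) ≠ 0 := brc_ne_zero (by omega)
  have n5 : brc (2*(k:ℤ)+2) ≠ 0 := brc_ne_zero (by omega)
  have e : (2*(k:ℤ)+2) = ((k:ℤ)+1+(k:ℤ)+1) := by ring
  rw [e]
  have z : brcFac 0 = 1 := by simp [brcFac]
  rw [z]
  field_simp

lemma bb_self (j k : ℕ) : bb j k k = 0 := by
  have : ((k:ℤ) - (k:ℤ)) = 0 := sub_self _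
  rw [bb, this]
  simp [brc]


/-- For `0 ≤ j ≤ k`, `Σ_{i=j}^k t_{k,i} s_{i,j}` is `1` if `j = k` and `0` if `j < k`. -/
theorem stmt2 (j k : ℕ) (hjk : j ≤ k) :
    ∑ i ∈ Finset.Icc j k, tcoef k i * scoef i j = if j = k then 1 else 0 := by
  rcases eq_or_lt_of_le hjk with h | h
  · subst h; rw [if_pos rfl, Finset.Icc_self, Finset.sum_singleton]; exact diag j
  · rw [if_neg (by omega)]
    have hN1 : 1 ≤ k - j := by omega
    rw [← Finset.Ico_add_one_right_eq_Icc, Finset.sum_Ico_eq_sum_range, show k + 1 - j = (k-j) + 1 from by omega,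
        Finset.sum_range_succ']
    have hb : ∀ m ∈ Finset.range (k-j),
        tcoef k (j+(m+1)) * scoef (j+(m+1)) j = bb j k (j+(m+1)) - bb j k (j+m) := by
      intro m hm
      have hm' : m < k - j := Finset.mem_range.mp hm
      obtain ⟨r, hr⟩ : ∃ r, k = j+(m+1)+r := ⟨k - (j+m+1), by omega⟩
      rw [hr]
      exact step j m r
    rw [Finset.sum_congr rfl hb, Finset.sum_range_sub (fun m => bb j k (j+m))]
    obtain ⟨r, hr⟩ : ∃ r, k = j + r + 1 := ⟨k - j - 1, by omega⟩
    have h0 : tcoef k (j+0) * scoef (j+0) j = bb j k j := by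
      rw [add_zero, hr]; exact base j r
    rw [h0, show j + (k-j) = k from by omega, bb_self]
    ring
end
end

section
/- For every integer k ≥ 0, Σ_{l=0}^{k} (−1)^l q^{l² + l + l(l−1)/2} (1 − q^{2l+1}) / ((q;q)_{k−l} (q;q)_{k+l+1}) = 1/(q;q)_k in F; that is, the pair α_l = (−1)^l q^{l²+l+l(l−1)/2}(1−q^{2l+1})/(1−q), β_k = 1/(q;q)_k is a Bailey pair relative to x = q. -/
open Finset

noncomputable section

/- ### auxiliary lemmas -/

lemma one_sub_qq_pow_ne {n : ℕ} (hn : n ≠ 0) : (1 : F) - qq ^ n ≠ 0 := by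
  rw [sub_ne_zero]
  intro h
  have hx : (RatFunc.X : F) ^ (2 * n) = 1 := by
    rw [pow_mul]
    exact (by simpa [qq, qv] using h.symm)
  have h2 : (algebraMap (Polynomial ℚ) F) (Polynomial.X ^ (2 * n)) =
      (algebraMap (Polynomial ℚ) F) 1 := by
    simpa [map_pow, RatFunc.algebraMap_X] using hx
  have h3 := RatFunc.algebraMap_injective ℚ h2
  have h4 := congrArg Polynomial.natDegree h3
  simp [Polynomial.natDegree_X_pow] at h4
  omega

lemma poch_qq_ne (n : ℕ) : poch qq n ≠ 0 := by
  rw [poch]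
  refine Finset.prod_ne_zero_iff.mpr fun j _ => ?_
  have : (1 : F) - qq * qq ^ j = 1 - qq ^ (j + 1) := by ring
  rw [this]
  exact one_sub_qq_pow_ne (by omega)

lemma poch_qq_succ (n : ℕ) : poch qq (n + 1) = poch qq n * (1 - qq ^ (n + 1)) := by
  rw [poch, Finset.prod_range_succ, ← poch]
  congr 1
  ring

/-- normalized summand -/
def fterm (k l : ℕ) : F :=
  (-1) ^ l * qq ^ (l ^ 2 + l + l * (l - 1) / 2) * (1 - qq ^ (2 * l + 1)) * poch qq k /
    (poch qq (k - l) * poch qq (k + l + 1))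

/-- WZ certificate -/
def gterm (k l : ℕ) : F :=
  (-1) ^ (l + 1) * qq ^ (k + 1 - l + (l ^ 2 + l + l * (l - 1) / 2)) * (1 - qq ^ l) *
    poch qq k / (poch qq (k + 1 - l) * poch qq (k + l + 1))

lemma ee_succ (l : ℕ) :
    (l + 1) ^ 2 + (l + 1) + (l + 1) * (l + 1 - 1) / 2 =
      l ^ 2 + l + l * (l - 1) / 2 + (3 * l + 2) := by
  have h1 : (l + 1) * (l + 1 - 1) = l * (l - 1) + 2 * l := by
    cases l with
    | zero => rfl
    | succ n => simp [Nat.succ_sub_one]; ring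
  rw [h1, Nat.add_mul_div_left _ _ (by norm_num : (0:ℕ) < 2)]
  generalize l * (l - 1) / 2 = c
  ring

lemma gterm_zero (k : ℕ) : gterm k 0 = 0 := by
  simp [gterm]

lemma stepA (l m : ℕ) :
    fterm (l + m + 1) l = fterm (l + m) l + (gterm (l + m) (l + 1) - gterm (l + m) l) := by
  simp only [fterm, gterm]
  rw [show l + m + 1 - l = m + 1 from by omega,
    show l + m - l = m from by omega,
    show l + m + 1 - (l + 1) = m from by omega,
    show l + m + 1 + l + 1 = l + m + l + 1 + 1 from by omega,
    show l + m + (l + 1) + 1 = l + m + l + 1 + 1 from by omega,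
    ee_succ l]
  rw [poch_qq_succ m, poch_qq_succ (l + m), poch_qq_succ (l + m + l + 1)]
  have hw0 : (1 : F) - qq * qq ^ l * qq ^ l * qq ^ (m + 1) ≠ 0 := by
    have h := one_sub_qq_pow_ne (n := l + m + l + 1 + 1) (by omega)
    rwa [show qq ^ (l + m + l + 1 + 1) = qq * qq ^ l * qq ^ l * qq ^ (m + 1) from by ring] at h
  rw [show qq ^ (2 * l + 1) = qq * qq ^ l * qq ^ l from by ring,
    show qq ^ (l + m + 1) = qq ^ l * qq ^ (m + 1) from by ring,
    show qq ^ (l + m + l + 1 + 1) = qq * qq ^ l * qq ^ l * qq ^ (m + 1) from by ring,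
    show qq ^ (m + (l ^ 2 + l + l * (l - 1) / 2 + (3 * l + 2))) =
      qq ^ (l ^ 2 + l + l * (l - 1) / 2) * (qq * qq ^ l * qq ^ l * qq ^ l * qq ^ (m + 1)) from by
        ring,
    show qq ^ (l + 1) = qq * qq ^ l from by ring,
    show qq ^ (m + 1 + (l ^ 2 + l + l * (l - 1) / 2)) =
      qq ^ (l ^ 2 + l + l * (l - 1) / 2) * qq ^ (m + 1) from by ring,
    show ((-1 : F)) ^ (l + 1 + 1) = (-1) ^ l from by ring,
    show ((-1 : F)) ^ (l + 1) = -(-1) ^ l from by ring]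
  have hU0 : (1 : F) - qq ^ (m + 1) ≠ 0 := one_sub_qq_pow_ne (by omega)
  have hPm0 : poch qq m ≠ 0 := poch_qq_ne m
  have hC0 : poch qq (l + m + l + 1) ≠ 0 := poch_qq_ne (l + m + l + 1)
  generalize hE : qq ^ (l ^ 2 + l + l * (l - 1) / 2) = E
  generalize hA : qq ^ l = A  at hw0 ⊢
  generalize hU : qq ^ (m + 1) = U at hw0 hU0 ⊢
  generalize hPm : poch qq m = Pm at hPm0 ⊢
  generalize hPB : poch qq (l + m) = PB
  generalize hC : poch qq (l + m + l + 1) = C at hC0 ⊢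
  have hd3 : Pm * (C * (1 - qq * A * A * U)) ≠ 0 := mul_ne_zero hPm0 (mul_ne_zero hC0 hw0)
  have hd4 : Pm * (1 - U) * C ≠ 0 := mul_ne_zero (mul_ne_zero hPm0 hU0) hC0
  have hd2 : Pm * C ≠ 0 := mul_ne_zero hPm0 hC0
  have hd34 : Pm * (C * (1 - qq * A * A * U)) * (Pm * (1 - U) * C) ≠ 0 := mul_ne_zero hd3 hd4
  have hdL : Pm * (1 - U) * (C * (1 - qq * A * A * U)) ≠ 0 :=
    mul_ne_zero (mul_ne_zero hPm0 hU0) (mul_ne_zero hC0 hw0)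
  have hdR : Pm * C * (Pm * (C * (1 - qq * A * A * U)) * (Pm * (1 - U) * C)) ≠ 0 :=
    mul_ne_zero hd2 hd34
  rw [div_sub_div _ _ hd3 hd4, div_add_div _ _ hd2 hd34, div_eq_div_iff hdL hdR]
  ring

lemma stepB (k : ℕ) : fterm (k + 1) (k + 1) = -gterm k (k + 1) := by
  simp only [fterm, gterm]
  rw [show k + 1 - (k + 1) = 0 from by omega,
    show k + 1 + (k + 1) + 1 = k + (k + 1) + 1 + 1 from by omega]
  rw [poch_qq_succ (k + (k + 1) + 1), poch_qq_succ k]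
  rw [show qq ^ (2 * (k + 1) + 1) = qq ^ (k + (k + 1) + 1 + 1) from by ring,
    show ((-1 : F)) ^ (k + 1 + 1) = -(-1) ^ (k + 1) from by ring]
  have hC0 : poch qq (k + (k + 1) + 1) ≠ 0 := poch_qq_ne (k + (k + 1) + 1)
  have hW0 : (1 : F) - qq ^ (k + (k + 1) + 1 + 1) ≠ 0 := one_sub_qq_pow_ne (by omega)
  rw [show poch qq 0 = 1 from by simp [poch], ← neg_div]
  simp only [one_mul, zero_add]
  rw [div_eq_div_iff (mul_ne_zero hC0 hW0) hC0]
  ring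

lemma key (k : ℕ) : ∑ l ∈ Finset.range (k + 1), fterm k l = 1 := by
  induction k with
  | zero =>
    have h1 : (1 : F) - qq ≠ 0 := by
      have h := one_sub_qq_pow_ne (n := 1) one_ne_zero
      simpa using h
    simp [fterm, poch, div_self h1]
  | succ k ih =>
    rw [Finset.sum_range_succ]
    have hs : ∀ l ∈ Finset.range (k + 1),
        fterm (k + 1) l = fterm k l + (gterm k (l + 1) - gterm k l) := by
      intro l hl
      have hlk : l ≤ k := Nat.lt_succ_iff.mp (Finset.mem_range.mp hl)
      have h := stepA l (k - l)
      rwa [show l + (k - l) = k from by omega] at h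
    rw [Finset.sum_congr rfl hs, Finset.sum_add_distrib, ih,
      Finset.sum_range_sub (fun l => gterm k l), gterm_zero, stepB]
    ring

/-- The Bailey pair `α_l = (-1)^l q^{l²+l+l(l-1)/2}(1-q^{2l+1})/(1-q)`, `β_k = 1/(q;q)_k`
relative to `x = q`. -/
theorem stmt15 (k : ℕ) :
    ∑ l ∈ Finset.range (k + 1),
        (-1) ^ l * qq ^ (l ^ 2 + l + l * (l - 1) / 2) * (1 - qq ^ (2 * l + 1)) /
          (poch qq (k - l) * poch qq (k + l + 1)) =
      1 / poch qq k := by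
  have h : ∀ l : ℕ,
      (-1) ^ l * qq ^ (l ^ 2 + l + l * (l - 1) / 2) * (1 - qq ^ (2 * l + 1)) /
          (poch qq (k - l) * poch qq (k + l + 1)) = fterm k l / poch qq k := by
    intro l
    rw [fterm]
    have h1 := poch_qq_ne (k - l)
    have h2 := poch_qq_ne (k + l + 1)
    have h3 := poch_qq_ne k
    field_simp
  simp only [h]
  rw [← Finset.sum_div, key]
end
end
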